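/- Let λ be a cardinal, 𝕄 a model with universe λ in a countable vocabulary, and define the splitting rank rk(w, 𝕄) on nonempty finite subsets w ⊆ λ as in the reference. Then for all ordinals δ ≥ γ and all nonempty finite sets v ⊆ w ⊆ λ: if rk(w, 𝕄) ≥ δ, then rk(v, 𝕄) ≥ γ. -/

import Mathlib

open FirstOrder

/-- The increasing enumeration of a finite set in a linear order. -/
noncomputable def enumFun {M : Type*} [LinearOrder M] (w : Finset M) : Fin w.card → M :=
  fun i => (w.orderIsoOfFin rfl i : M)

/-- `rk(w,𝕄) ≥ 0`: every quantifier-free formula satisfied by the increasing enumeration of `w`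
remains satisfied after replacing any one coordinate by uncountably many elements. -/
def rkBase (L : Language) (M : Type*) [LinearOrder M] [L.Structure M] (w : Finset M) : Prop :=
  ∀ φ : L.Formula (Fin w.card), φ.IsQF → ∀ k : Fin w.card,
    φ.Realize (enumFun w) →
      ¬ ({α : M | φ.Realize (Function.update (enumFun w) k α)}).Countable

/-- Successor step of the splitting rank: given the predicate `IH` expressing `rk ≥ δ`,
this expresses `rk(w) ≥ δ + 1`. -/
def rkSucc (L : Language) (M : Type*) [LinearOrder M] [L.Structure M]
    (IH : Finset M → Prop) (w : Finset M) : Prop :=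
  ∀ φ : L.Formula (Fin w.card), φ.IsQF → ∀ k : Fin w.card,
    φ.Realize (enumFun w) →
      ∃ α : M, α ∉ w ∧ IH (insert α w) ∧ φ.Realize (Function.update (enumFun w) k α)

/-- The splitting rank relation `rk(w,𝕄) ≥ δ`, defined by transfinite recursion on `δ`. -/
noncomputable def rkGe (L : Language) (M : Type*) [LinearOrder M] [L.Structure M]
    (δ : Ordinal) : Finset M → Prop :=
  Ordinal.limitRecOn δ (rkBase L M) (fun _ IH => rkSucc L M IH)
    (fun _ _ IH w => ∀ γ (hγ : γ < _), IH γ hγ w)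

section Aux

variable {M : Type*} [LinearOrder M]

lemma enumFun_mem (w : Finset M) (i : Fin w.card) : enumFun w i ∈ w :=
  (w.orderIsoOfFin rfl i).2

lemma enumFun_inj (w : Finset M) : Function.Injective (enumFun w) :=
  fun _ _ h => (w.orderIsoOfFin rfl).injective (Subtype.ext h)

/-- The embedding of index sets induced by `v ⊆ w`. -/
noncomputable def embOf {v w : Finset M} (hvw : v ⊆ w) : Fin v.card → Fin w.card :=
  fun i => (w.orderIsoOfFin rfl).symm ⟨enumFun v i, hvw (enumFun_mem v i)⟩

lemma enum_comp_embOf {v w : Finset M} (hvw : v ⊆ w) :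
    enumFun w ∘ embOf hvw = enumFun v := by
  funext i; simp [enumFun, embOf]

lemma embOf_inj {v w : Finset M} (hvw : v ⊆ w) : Function.Injective (embOf hvw) := by
  intro i j h
  apply enumFun_inj v
  rw [← congrFun (enum_comp_embOf hvw) i, ← congrFun (enum_comp_embOf hvw) j]
  simp [Function.comp, h]

variable {L : Language} [L.Structure M]

lemma realize_emb_base {v w : Finset M} (hvw : v ⊆ w) (φ : L.Formula (Fin v.card)) :
    (φ.relabel (embOf hvw)).Realize (enumFun w) ↔ φ.Realize (enumFun v) := by
  rw [Language.Formula.realize_relabel, enum_comp_embOf hvw]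

lemma realize_emb_update {v w : Finset M} (hvw : v ⊆ w) (φ : L.Formula (Fin v.card))
    (k : Fin v.card) (α : M) :
    (φ.relabel (embOf hvw)).Realize (Function.update (enumFun w) (embOf hvw k) α) ↔
      φ.Realize (Function.update (enumFun v) k α) := by
  rw [Language.Formula.realize_relabel,
    Function.update_comp_eq_of_injective _ (embOf_inj hvw), enum_comp_embOf hvw]

lemma isQF_relabel {α β : Type*} {φ : L.Formula α} (h : φ.IsQF) (g : α → β) :
    (φ.relabel g).IsQF :=
  h.relabel _

lemma rkGe_zero (w : Finset M) : rkGe L M 0 w ↔ rkBase L M w := by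
  rw [rkGe, Ordinal.limitRecOn_zero]

lemma rkGe_succ (δ : Ordinal) (w : Finset M) :
    rkGe L M (Order.succ δ) w ↔ rkSucc L M (rkGe L M δ) w := by
  rw [rkGe, Ordinal.limitRecOn_succ]
  rfl

lemma rkGe_limit {δ : Ordinal} (hδ : Order.IsSuccLimit δ) (w : Finset M) :
    rkGe L M δ w ↔ ∀ γ < δ, rkGe L M γ w := by
  rw [rkGe, Ordinal.limitRecOn_limit _ _ _ _ hδ]
  rfl

/-- Subset monotonicity of the splitting rank, at a fixed ordinal. -/
lemma rkGe_mono_subset (δ : Ordinal) :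
    ∀ v w : Finset M, v ⊆ w → rkGe L M δ w → rkGe L M δ v := by
  induction δ using Ordinal.limitRecOn with
  | zero =>
    intro v w hvw h
    rw [rkGe_zero] at h ⊢
    intro φ hφ k hk
    have := h (φ.relabel (embOf hvw)) (isQF_relabel hφ _) (embOf hvw k)
      ((realize_emb_base hvw φ).2 hk)
    intro hc
    apply this
    apply hc.mono
    intro α hα
    exact (realize_emb_update hvw φ k α).1 hα
  | add_one δ IH =>
    intro v w hvw h
    rw [← Order.succ_eq_add_one, rkGe_succ] at h ⊢
    intro φ hφ k hk
    obtain ⟨α, hαw, hrk, hreal⟩ := h (φ.relabel (embOf hvw)) (isQF_relabel hφ _) (embOf hvw k)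
      ((realize_emb_base hvw φ).2 hk)
    refine ⟨α, fun hαv => hαw (hvw hαv), ?_, (realize_emb_update hvw φ k α).1 hreal⟩
    exact IH (insert α v) (insert α w) (Finset.insert_subset_insert _ hvw) hrk
  | limit δ hδ IH =>
    intro v w hvw h
    rw [rkGe_limit hδ] at h ⊢
    intro γ hγ
    exact IH γ hγ v w hvw (h γ hγ)

/-- Dropping one from a successor rank. -/
lemma rkGe_of_succ {δ : Ordinal} {w : Finset M} (hw : w.Nonempty)
    (h : rkGe L M (Order.succ δ) w) : rkGe L M δ w := by
  rw [rkGe_succ] at h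
  have hpos : 0 < w.card := Finset.card_pos.2 hw
  obtain ⟨α, -, hrk, -⟩ := h ⊤ Language.BoundedFormula.IsQF.top ⟨0, hpos⟩ (by simp)
  exact rkGe_mono_subset δ w (insert α w) (Finset.subset_insert _ _) hrk

/-- Ordinal monotonicity of the splitting rank. -/
lemma rkGe_mono_ord (δ : Ordinal) : ∀ γ ≤ δ, ∀ w : Finset M, w.Nonempty →
    rkGe L M δ w → rkGe L M γ w := by
  induction δ using Ordinal.induction with
  | h δ IH =>
    intro γ hγδ w hw h
    rcases eq_or_lt_of_le hγδ with rfl | hγ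
    · exact h
    rcases Ordinal.zero_or_succ_or_isSuccLimit δ with rfl | ⟨δ', rfl⟩ | hlim
    · exact absurd hγ (not_lt_zero (a := γ))
    · exact IH δ' (Order.lt_succ δ') γ (Order.lt_succ_iff.1 hγ) w hw (rkGe_of_succ hw h)
    · exact (rkGe_limit hlim w).1 h γ hγ

end Aux

/-- Monotonicity of the splitting rank: if `v ⊆ w` are nonempty finite sets and `γ ≤ δ`,
then `rk(w,𝕄) ≥ δ` implies `rk(v,𝕄) ≥ γ`. -/
theorem stmt_5 (L : Language) (M : Type*) [LinearOrder M] [L.Structure M]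
    (δ γ : Ordinal) (hγδ : γ ≤ δ) (v w : Finset M) (hv : v.Nonempty) (hvw : v ⊆ w)
    (h : rkGe L M δ w) : rkGe L M γ v := by
  have hw : w.Nonempty := hv.mono hvw
  exact rkGe_mono_subset γ v w hvw (rkGe_mono_ord δ γ hγδ w hw h)
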